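/- Let M be a Σ-injective left R-module. Then every finitely injective submodule of M^(ℵ₀) is a direct summand of M^(ℵ₀), and in particular injective. -/

import Mathlib

open DirectSum

/-- A module `M` is finitely injective if every finite subset of `M` is contained in an
injective submodule of `M`. -/
def FinitelyInjective (R : Type*) [Ring R] (M : Type*) [AddCommGroup M] [Module R M] : Prop :=
  ∀ s : Finset M, ∃ N : Submodule R M, Module.Injective R N ∧ ∀ x ∈ s, x ∈ N

/-- An injective module `M` is `Σ`-injective if every direct sum of copies of `M`
is injective. -/
def SigmaInjective (R : Type u) [Ring R] (M : Type v) [AddCommGroup M] [Module R M] : Prop :=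
  ∀ ι : Type v, Module.Injective R (⨁ _ : ι, M)

section Aux

variable {R : Type u} [Ring R]

/-- Transport of `Module.Injective` along a linear equivalence (same universe). -/
theorem ModuleInjective.of_equiv {A B : Type v} [AddCommGroup A] [Module R A]
    [AddCommGroup B] [Module R B] (hA : Module.Injective R A) (e : A ≃ₗ[R] B) :
    Module.Injective R B where
  out X Y _ _ _ _ f hf g := by
    obtain ⟨h, hh⟩ := hA.out f hf (e.symm.toLinearMap ∘ₗ g)
    refine ⟨e.toLinearMap ∘ₗ h, fun x => ?_⟩
    simp [hh x]

variable {Q : Type v} [AddCommGroup Q] [Module R Q]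

/-- Finite systems `a • ? = a • w` with coefficients sending `w` into `N` are solvable in a
finitely injective submodule `N`. -/
theorem fin_solve {N : Submodule R Q} (hN : FinitelyInjective R N)
    (w : Q) (F : Finset R) (hF : ∀ a ∈ F, a • w ∈ N) :
    ∃ n : N, ∀ a ∈ F, a • (n : Q) = a • w := by
  classical
  set sF : Finset N := F.attach.image (fun a : {x // x ∈ F} => (⟨a.1 • w, hF a.1 a.2⟩ : N)) with hsF
  obtain ⟨E, hE, hmem⟩ := hN sF
  set Ehat : Submodule R Q := E.map N.subtype with hEhat
  have hEhatInj : Module.Injective R Ehat :=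
    ModuleInjective.of_equiv hE (Submodule.equivMapOfInjective N.subtype Subtype.val_injective E)
  set Y₀ : Submodule R Q := Ehat ⊔ Submodule.span R {w} with hY₀
  obtain ⟨ρ, hρ⟩ := hEhatInj.out (Submodule.inclusion (le_sup_left : Ehat ≤ Y₀))
    (Submodule.inclusion_injective _) LinearMap.id
  have hwY : w ∈ Y₀ := Submodule.mem_sup_right (Submodule.mem_span_singleton_self w)
  set nE : Ehat := ρ ⟨w, hwY⟩ with hnE
  have hnN : (nE : Q) ∈ N := Submodule.map_subtype_le N E nE.2
  refine ⟨⟨(nE : Q), hnN⟩, fun a ha => ?_⟩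
  have hawE : a • w ∈ Ehat := by
    refine ⟨⟨a • w, hF a ha⟩, hmem _ ?_, rfl⟩
    exact Finset.mem_image.mpr ⟨⟨a, ha⟩, Finset.mem_attach _ _, rfl⟩
  have h1 : (⟨a • w, Y₀.smul_mem a hwY⟩ : Y₀) = Submodule.inclusion
      (le_sup_left : Ehat ≤ Y₀) ⟨a • w, hawE⟩ := by
    apply Subtype.ext; rfl
  have h2 : a • nE = ρ ⟨a • w, Y₀.smul_mem a hwY⟩ := by
    rw [hnE, ← map_smul]
    congr 1
  calc a • ((nE : Q)) = ((a • nE : Ehat) : Q) := rfl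
    _ = a • w := by rw [h2, h1, hρ]; rfl

/-- The key solvability lemma: if `⨁ ℕ, Q` is injective and `N ≤ Q` is finitely injective,
then any system `a • ? = a • w` (`a ∈ J`) whose right-hand sides lie in `N` is solvable in `N`. -/
theorem full_solve (hD : Module.Injective R (⨁ _ : ℕ, Q))
    {N : Submodule R Q} (hN : FinitelyInjective R N)
    (w : Q) (J : Ideal R) (hvals : ∀ a ∈ J, a • w ∈ N) :
    ∃ n ∈ N, ∀ a ∈ J, a • n = a • w := by
  classical
  by_contra hcon
  push_neg at hcon
  have hyp : ∀ y : N, ∃ a : J, (a : R) • (y : Q) ≠ (a : R) • w := by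
    intro y
    obtain ⟨a, haJ, ha⟩ := hcon (y : Q) y.2
    exact ⟨⟨a, haJ⟩, fun h => ha h⟩
  -- choice of a "bad" coefficient for each candidate solution
  let pickA : N → J := fun y => (hyp y).choose
  have pickA_spec : ∀ y : N, (pickA y : R) • (y : Q) ≠ (pickA y : R) • w :=
    fun y => (hyp y).choose_spec
  -- the finite system solved at each step
  have step : ∀ f : ℕ → N, ∀ n : ℕ,
      ∃ y : N, ∀ a ∈ (Finset.range (n + 1)).image (fun k => ((pickA (f k) : J) : R)),
        a • (y : Q) = a • (w - (f n : Q)) := by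
    intro f n
    apply fin_solve hN
    intro a ha
    obtain ⟨k, _, hk⟩ := Finset.mem_image.mp ha
    have haJ : a ∈ J := hk ▸ (pickA (f k)).2
    have : a • w ∈ N := hvals a haJ
    have h2 : a • (f n : Q) ∈ N := N.smul_mem a (f n).2
    rw [smul_sub]
    exact N.sub_mem this h2
  let nxt : (ℕ → N) → ℕ → N := fun f n => (step f n).choose
  have nxt_spec : ∀ (f : ℕ → N) (n : ℕ),
      ∀ a ∈ (Finset.range (n + 1)).image (fun k => ((pickA (f k) : J) : R)),
        a • ((nxt f n : N) : Q) = a • (w - (f n : Q)) := fun f n => (step f n).choose_spec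
  -- iterative construction of partial sums, carrying full history
  let F : ℕ → ℕ → N := fun n => Nat.rec (motive := fun _ => ℕ → N)
    (fun _ => 0) (fun n fn => fun m => if m ≤ n then fn m else fn n + nxt fn n) n
  have hF_succ : ∀ n m, F (n + 1) m = if m ≤ n then F n m else F n n + nxt (F n) n :=
    fun n m => rfl
  have hcoh : ∀ n m, m ≤ n → F n m = F m m := by
    intro n
    induction n with
    | zero =>
      intro m hm
      have hm0 : m = 0 := Nat.le_zero.mp hm
      subst hm0
      rfl
    | succ n ih =>
      intro m hm
      rcases Nat.lt_or_ge m (n + 1) with h | h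
      · rw [hF_succ, if_pos (Nat.lt_succ_iff.mp h)]
        exact ih m (Nat.lt_succ_iff.mp h)
      · have : m = n + 1 := le_antisymm hm h
        rw [this]
  let s : ℕ → N := fun n => F n n
  let a : ℕ → J := fun n => pickA (s n)
  let z : ℕ → Q := fun n => w - (s n : Q)
  have hs_succ : ∀ n, s (n + 1) = s n + nxt (F n) n := by
    intro n
    show F (n + 1) (n + 1) = F n n + nxt (F n) n
    rw [hF_succ, if_neg (by omega)]
  have hstep : ∀ n k, k ≤ n → (a k : R) • ((nxt (F n) n : N) : Q) = (a k : R) • z n := by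
    intro n k hk
    have hmem : ((a k : J) : R) ∈ (Finset.range (n + 1)).image
        (fun j => ((pickA (F n j) : J) : R)) := by
      refine Finset.mem_image.mpr ⟨k, Finset.mem_range.mpr (Nat.lt_succ_of_le hk), ?_⟩
      rw [hcoh n k hk]
    exact nxt_spec (F n) n _ hmem
  have hINV : ∀ k n, k < n → (a k : R) • z n = 0 := by
    intro k n hkn
    obtain ⟨m, rfl⟩ : ∃ m, n = m + 1 := ⟨n - 1, by omega⟩
    have hk : k ≤ m := Nat.lt_succ_iff.mp hkn
    have h1 : z (m + 1) = z m - ((nxt (F m) m : N) : Q) := by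
      show w - (s (m+1) : Q) = (w - (s m : Q)) - _
      rw [hs_succ m]
      push_cast
      abel
    rw [h1, smul_sub, hstep m k hk]
    show (a k : R) • z m - (a k : R) • z m = 0
    exact sub_self _
  have hNONZ : ∀ n, (a n : R) • z n ≠ 0 := by
    intro n h
    apply pickA_spec (s n)
    have : (a n : R) • (w - (s n : Q)) = 0 := h
    rw [smul_sub, sub_eq_zero] at this
    exact this.symm
  -- Now derive the contradiction using injectivity of `⨁ ℕ, Q`.
  let coeL : (⨁ _ : ℕ, Q) →ₗ[R] (ℕ → Q) := LinearMap.pi (fun n => DFinsupp.lapply n)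
  have hcoeL_apply : ∀ (d : ⨁ _ : ℕ, Q) (n : ℕ), coeL d n = d n := fun d n => rfl
  have hcoeL_inj : Function.Injective coeL := by
    intro x y h
    exact DFunLike.ext _ _ fun n => congrFun h n
  set D : Submodule R (ℕ → Q) := LinearMap.range coeL with hD'
  have hDinj : Module.Injective R D :=
    ModuleInjective.of_equiv hD (LinearEquiv.ofInjective coeL hcoeL_inj)
  set zz : ℕ → Q := fun n => z n with hzz
  set C : Submodule R (ℕ → Q) := Submodule.span R {zz} with hC
  obtain ⟨φ, hφ⟩ := hDinj.out (X := ↥(C ⊓ D)) (Y := ↥C)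
    (Submodule.inclusion inf_le_left) (Submodule.inclusion_injective _)
    (Submodule.inclusion inf_le_right)
  have hzzC : zz ∈ C := Submodule.mem_span_singleton_self zz
  set wv : D := φ ⟨zz, hzzC⟩ with hwv
  obtain ⟨d, hd⟩ := wv.2
  obtain ⟨m, hm⟩ := Infinite.exists_notMem_finset d.support
  have hdm : d m = 0 := DFinsupp.notMem_support_iff.mp hm
  -- the element `a m • zz` lies in `C ⊓ D`
  set x : ℕ → Q := (a m : R) • zz with hx
  have hxC : x ∈ C := C.smul_mem _ hzzC
  have hxD : x ∈ D := by
    refine ⟨DFinsupp.mk (Finset.range (m + 1)) (fun i => x i), ?_⟩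
    funext n
    rw [hcoeL_apply]
    by_cases hn : n ∈ Finset.range (m + 1)
    · rw [DFinsupp.mk_apply, dif_pos hn]
    · rw [DFinsupp.mk_apply, dif_neg hn]
      have hmn : m < n := by
        simp only [Finset.mem_range] at hn; omega
      have : x n = (a m : R) • z n := rfl
      rw [this, hINV m n hmn]
  have key : (⟨x, hxD⟩ : D) = (a m : R) • wv := by
    have h1 : (⟨x, hxC⟩ : C) = (a m : R) • (⟨zz, hzzC⟩ : C) := by
      apply Subtype.ext; rfl
    have h2 : (⟨x, hxC⟩ : C) = Submodule.inclusion (inf_le_left : C ⊓ D ≤ C)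
        ⟨x, ⟨hxC, hxD⟩⟩ := by apply Subtype.ext; rfl
    have h3 : φ (⟨x, hxC⟩ : C) = ⟨x, hxD⟩ := by
      rw [h2, hφ]
      apply Subtype.ext; rfl
    rw [← h3, h1, map_smul, ← hwv]
  have keyfun : x = (a m : R) • (wv : ℕ → Q) := congrArg Subtype.val key
  have hwvm : (wv : ℕ → Q) m = 0 := by
    rw [← hd, hcoeL_apply, hdm]
  have : x m = 0 := by
    rw [keyfun]
    show (a m : R) • (wv : ℕ → Q) m = 0
    rw [hwvm, smul_zero]
  exact hNONZ m this

end Aux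

theorem finitelyInjective_submodule_isCompl_of_sigmaInjective (R : Type u) [Ring R] (M : Type v)
    [AddCommGroup M] [Module R M] (hM : SigmaInjective R M)
    (N : Submodule R (⨁ _ : ℕ, M)) (hN : FinitelyInjective R N) :
    (∃ P, IsCompl N P) ∧ Module.Injective R N := by
  classical
  set Q : Type v := ⨁ _ : ℕ, M with hQdef
  -- `Q` is injective
  have hQ : Module.Injective R Q := by
    refine ModuleInjective.of_equiv (hM (ULift.{v} ℕ)) ?_
    exact DirectSum.lequivCongrLeft R (Equiv.ulift : ULift.{v} ℕ ≃ ℕ)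
  -- `⨁ ℕ, Q` is injective
  have hD : Module.Injective R (⨁ _ : ℕ, Q) := by
    refine ModuleInjective.of_equiv (hM (ULift.{v} (Σ _ : ℕ, ℕ))) ?_
    exact (DirectSum.lequivCongrLeft R (Equiv.ulift : ULift.{v} (Σ _ : ℕ, ℕ) ≃ _)).trans
      (DirectSum.sigmaLcurryEquiv (R := R) (δ := fun (_ : ℕ) (_ : ℕ) => M))
  -- Zorn's lemma on partial retractions `Q →ₗ. N` restricting to the identity on `N`
  set sset : Set (Q →ₗ.[R] N) :=
    {p | N ≤ p.domain ∧ ∀ (x : Q) (hx : x ∈ N) (hx' : x ∈ p.domain), p ⟨x, hx'⟩ = ⟨x, hx⟩}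
    with hsset
  have hp₀ : (⟨N, LinearMap.id⟩ : Q →ₗ.[R] N) ∈ sset := by
    refine ⟨le_rfl, fun x hx hx' => rfl⟩
  obtain ⟨p, -, hps, hpmax⟩ := zorn_le_nonempty₀ sset (fun c hcs hchain y hy => by
    refine ⟨LinearPMap.sSup c hchain.directedOn, ⟨?_, ?_⟩, fun z hz => LinearPMap.le_sSup _ hz⟩
    · exact le_trans (hcs hy).1 (LinearPMap.le_sSup hchain.directedOn hy).1
    · intro x hx hx'
      have hxy : x ∈ y.domain := (hcs hy).1 hx
      have := LinearPMap.sSup_apply hchain.directedOn hy ⟨x, hxy⟩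
      rw [(hcs hy).2 x hx hxy] at this
      convert this using 2) ⟨N, LinearMap.id⟩ hp₀
  -- maximal element has full domain
  have hdom : p.domain = ⊤ := by
    by_contra hne
    obtain ⟨q, hq⟩ : ∃ q : Q, q ∉ p.domain := by
      by_contra h
      push_neg at h
      exact hne (Submodule.eq_top_iff'.mpr h)
    set S := p.domain with hS
    set δ : S →ₗ[R] Q := N.subtype ∘ₗ p.toFun - S.subtype with hδ
    obtain ⟨δ', hδ'⟩ := hQ.out S.subtype Subtype.val_injective δ
    set w : Q := q + δ' q with hw
    set J : Ideal R := S.comap (LinearMap.toSpanSingleton R Q q) with hJ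
    have hmemJ : ∀ {c : R}, c ∈ J ↔ c • q ∈ S := fun {c} => Iff.rfl
    have hvals : ∀ c (hc : c ∈ J), c • w = ((p ⟨c • q, hc⟩ : N) : Q) := by
      intro c hc
      have h1 : c • w = c • q + δ' (c • q) := by rw [hw, smul_add, map_smul]
      have h2 : δ' (c • q) = δ ⟨c • q, hc⟩ := by
        have := hδ' (⟨c • q, hc⟩ : S)
        simpa using this
      rw [h1, h2]
      show c • q + (((p ⟨c • q, hc⟩ : N) : Q) - c • q) = _
      abel
    have hvalsN : ∀ a ∈ J, a • w ∈ N := by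
      intro a ha
      rw [hvals a ha]
      exact (p ⟨a • q, ha⟩).2
    obtain ⟨n, hnN, hn⟩ := full_solve hD hN w J hvalsN
    have Hc : ∀ c : R, c • q = 0 → c • (⟨n, hnN⟩ : N) = 0 := by
      intro c hc
      have hcJ : c ∈ J := by rw [hmemJ, hc]; exact S.zero_mem
      apply Subtype.ext
      show c • n = 0
      rw [hn c hcJ, hvals c hcJ]
      have h0 : (⟨c • q, hcJ⟩ : S) = 0 := by apply Subtype.ext; exact hc
      rw [h0, p.map_zero]
      rfl
    set g := LinearPMap.mkSpanSingleton' (σ := RingHom.id R) q (⟨n, hnN⟩ : N) Hc with hg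
    have compat : ∀ (x : p.domain) (y : g.domain), (x : Q) = y → p x = g y := by
      intro x y hxy
      have hy : (y : Q) ∈ Submodule.span R {q} := by
        have : g.domain = Submodule.span R {q} := by
          rw [hg, LinearPMap.domain_mkSpanSingleton]
        rw [← this]; exact y.2
      obtain ⟨c, hc⟩ := Submodule.mem_span_singleton.mp hy
      have hcJ : c ∈ J := by rw [hmemJ, hc]; exact (hxy ▸ x.2)
      have hyy : y = ⟨c • q, hc ▸ y.2⟩ := by apply Subtype.ext; exact hc.symm
      have hgy : g y = c • (⟨n, hnN⟩ : N) := by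
        rw [hyy]
        exact LinearPMap.mkSpanSingleton'_apply q _ Hc c _
      have hxx : x = ⟨c • q, hcJ⟩ := by apply Subtype.ext; rw [hxy, ← hc]
      rw [hgy, hxx]
      apply Subtype.ext
      show ((p ⟨c • q, hcJ⟩ : N) : Q) = c • n
      rw [hn c hcJ, hvals c hcJ]
    set p' := p.sup g compat with hp'
    have hle : p ≤ p' := p.left_le_sup g compat
    have hp's : p' ∈ sset := by
      constructor
      · exact le_trans hps.1 (le_trans hle.1 le_rfl)
      · intro x hx hx'
        have hxS : x ∈ p.domain := hps.1 hx
        have := hle.2 (x := ⟨x, hxS⟩) (y := ⟨x, hx'⟩) rfl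
        rw [← this]
        exact hps.2 x hx hxS
    have : p' ≤ p := hpmax hp's hle
    have hqp : q ∈ p'.domain := by
      show q ∈ p.domain ⊔ g.domain
      apply Submodule.mem_sup_right
      rw [hg, LinearPMap.domain_mkSpanSingleton]
      exact Submodule.mem_span_singleton_self q
    exact hq (this.1 hqp)
  -- the retraction
  set ρ : Q →ₗ[R] N :=
    p.toFun ∘ₗ LinearMap.codRestrict p.domain LinearMap.id
      (fun x => hdom ▸ Submodule.mem_top) with hρdef
  have hρ : ∀ (x : Q) (hx : x ∈ N), ρ x = ⟨x, hx⟩ := by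
    intro x hx
    exact hps.2 x hx _
  have hρN : ∀ x : Q, ((ρ x : Q)) ∈ N := fun x => (ρ x).2
  have hρρ : ∀ x : Q, ρ ((ρ x : Q)) = ρ x := fun x => by
    rw [hρ _ (ρ x).2]
  constructor
  · refine ⟨LinearMap.ker (N.subtype ∘ₗ ρ), ?_, ?_⟩
    · rw [disjoint_iff_inf_le]
      intro x ⟨hxN, hxK⟩
      have : ((ρ x : Q)) = 0 := hxK
      rw [hρ x hxN] at this
      exact this
    · rw [codisjoint_iff_le_sup]
      intro x _
      refine Submodule.mem_sup.mpr ⟨(ρ x : Q), (ρ x).2, x - (ρ x : Q), ?_, by abel⟩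
      show ((ρ (x - (ρ x : Q)) : Q)) = 0
      rw [map_sub, hρρ x, sub_self]
      rfl
  · constructor
    intro X Y _ _ _ _ f hf g
    obtain ⟨h, hh⟩ := hQ.out f hf (N.subtype ∘ₗ g)
    refine ⟨ρ ∘ₗ h, fun x => ?_⟩
    show ρ (h (f x)) = g x
    rw [hh x]
    show ρ ((g x : Q)) = g x
    rw [hρ _ (g x).2]
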